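/- Let G = (V,E) be a finite simple graph on n vertices, let γ ∈ (0, 1/2], set k := ⌈1/γ⌉, and let M be a matching in G such that for every i ∈ {0, 1, …, k}, every collection of pairwise vertex-disjoint augmenting paths of length 2i+1 with respect to M in G has size at most γ²·n. Then μ(G) ≤ |M| + 3·γ·n. -/

import Mathlib

attribute [local instance] Classical.propDecidable

/-- A matching in a simple graph `G`, represented as a finite set of edges of `G`
no two of which share an endpoint. -/
def IsMatching {V : Type*} (G : SimpleGraph V) (M : Finset (Sym2 V)) : Prop :=
  (∀ e ∈ M, e ∈ G.edgeSet) ∧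
  ∀ e ∈ M, ∀ f ∈ M, e ≠ f → ∀ v : V, v ∈ e → v ∉ f

/-- The matching number `μ(G)`: the maximum size of a matching in `G`. -/
noncomputable def matchNum {V : Type*} (G : SimpleGraph V) : ℕ :=
  sSup {k | ∃ M : Finset (Sym2 V), IsMatching G M ∧ M.card = k}

/-- An augmenting path of length `2k+1` w.r.t. the matching `M`: a sequence of distinct
vertices `p 0, …, p (2k+1)` whose endpoints are unmatched, with
`(p (2i), p (2i+1)) ∈ E \ M` for `i ∈ [0,k]` and `(p (2i−1), p (2i)) ∈ M` for `i ∈ [1,k]`. -/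
def IsAugPath {V : Type*} (G : SimpleGraph V) (M : Finset (Sym2 V)) (k : ℕ) (p : ℕ → V) :
    Prop :=
  (∀ i j, i ≤ 2*k+1 → j ≤ 2*k+1 → p i = p j → i = j) ∧
  (∀ e ∈ M, p 0 ∉ e) ∧ (∀ e ∈ M, p (2*k+1) ∉ e) ∧
  (∀ i ≤ k, G.Adj (p (2*i)) (p (2*i+1)) ∧ s(p (2*i), p (2*i+1)) ∉ M) ∧
  (∀ i, 1 ≤ i → i ≤ k → s(p (2*i-1), p (2*i)) ∈ M)

namespace AugAux

variable {V : Type*} {G : SimpleGraph V} {M N : Finset (Sym2 V)} {u v w : V}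

/-- `v` is matched by `M`. -/
abbrev Mtd (M : Finset (Sym2 V)) (v : V) : Prop := ∃ w, s(v, w) ∈ M

/-- the partner of `v` in `M` (junk value `v` if unmatched). -/
noncomputable def mate (M : Finset (Sym2 V)) (v : V) : V :=
  if h : ∃ w, s(v, w) ∈ M then h.choose else v

lemma mem_mate (hv : Mtd M v) : s(v, mate M v) ∈ M := by
  unfold mate; rw [dif_pos hv]; exact hv.choose_spec

lemma mate_eq (hM : IsMatching G M) (h : s(v, w) ∈ M) : mate M v = w := by
  have hv : Mtd M v := ⟨w, h⟩
  have h2 := mem_mate hv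
  by_cases he : s(v, mate M v) = s(v, w)
  · exact (Sym2.congr_right.mp he)
  · exact absurd (Sym2.mem_mk_left v w) (hM.2 _ h2 _ h he v (Sym2.mem_mk_left _ _))

lemma mate_ne (hM : IsMatching G M) (hv : Mtd M v) : mate M v ≠ v := by
  have := hM.1 _ (mem_mate hv)
  rw [SimpleGraph.mem_edgeSet] at this
  exact this.ne'

lemma mtd_mate (hv : Mtd M v) : Mtd M (mate M v) :=
  ⟨v, by rw [Sym2.eq_swap]; exact mem_mate hv⟩

lemma mate_mate (hM : IsMatching G M) (hv : Mtd M v) : mate M (mate M v) = v :=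
  mate_eq hM (by rw [Sym2.eq_swap]; exact mem_mate hv)

lemma mtd_iff : Mtd M v ↔ ∃ e ∈ M, v ∈ e := by
  constructor
  · rintro ⟨w, h⟩; exact ⟨_, h, Sym2.mem_mk_left _ _⟩
  · rintro ⟨e, he, hv⟩
    induction e with
    | _ a b =>
      rcases Sym2.mem_iff.mp hv with rfl | rfl
      · exact ⟨b, he⟩
      · exact ⟨a, by rw [Sym2.eq_swap]; exact he⟩

/-- alternating walk from `u`: even steps use `N`-edges, odd steps `M`-edges. -/
noncomputable def walk (M N : Finset (Sym2 V)) (u : V) : ℕ → V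
  | 0 => u
  | (m+1) => if Even m then mate N (walk M N u m) else mate M (walk M N u m)

/-- the step at position `j` is possible. -/
def ok (M N : Finset (Sym2 V)) (u : V) (j : ℕ) : Prop :=
  if Even j then Mtd N (walk M N u j) else Mtd M (walk M N u j)

lemma walk_succ_even {j : ℕ} (hj : Even j) :
    walk M N u (j+1) = mate N (walk M N u j) := by rw [walk, if_pos hj]

lemma walk_succ_odd {j : ℕ} (hj : ¬ Even j) :
    walk M N u (j+1) = mate M (walk M N u j) := by rw [walk, if_neg hj]

lemma step_even (hN : IsMatching G N) {j : ℕ} (hj : Even j) (hok : ok M N u j) :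
    s(walk M N u j, walk M N u (j+1)) ∈ N ∧
    mate N (walk M N u (j+1)) = walk M N u j ∧ Mtd N (walk M N u (j+1)) := by
  rw [ok, if_pos hj] at hok
  rw [walk_succ_even hj]
  exact ⟨mem_mate hok, mate_mate hN hok, mtd_mate hok⟩

lemma step_odd (hM : IsMatching G M) {j : ℕ} (hj : ¬ Even j) (hok : ok M N u j) :
    s(walk M N u j, walk M N u (j+1)) ∈ M ∧
    mate M (walk M N u (j+1)) = walk M N u j ∧ Mtd M (walk M N u (j+1)) := by
  rw [ok, if_neg hj] at hok
  rw [walk_succ_odd hj]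
  exact ⟨mem_mate hok, mate_mate hM hok, mtd_mate hok⟩

end AugAux

section Inj
open AugAux
variable {V : Type*} {G : SimpleGraph V} {M N : Finset (Sym2 V)} {u v w : V}

lemma walk_ne (hM : IsMatching G M) (hN : IsMatching G N) (hu : ¬ Mtd M u) {m : ℕ}
    (hok : ∀ j < m, ok M N u j) :
    ∀ b ≤ m, ∀ a < b, walk M N u a ≠ walk M N u b := by
  intro b
  induction b using Nat.strong_induction_on with
  | _ b IH =>
    intro hbm a hab heq
    match b, hab with
    | (c+1), hab =>
      have hcm : c < m := by omega
      rcases Nat.even_or_odd c with hc | hc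
      · -- b odd, last step an N-step
        have hc2 : c % 2 = 0 := Nat.even_iff.mp hc
        obtain ⟨sC, mateC, mtdC⟩ := step_even (u := u) (M := M) hN hc (hok c hcm)
        rcases Nat.even_or_odd a with ha | ha
        · -- a even : compare forward N-step from a
          have ha2 : a % 2 = 0 := Nat.even_iff.mp ha
          have h1 : walk M N u (a+1) = walk M N u c := by
            rw [walk_succ_even ha, heq, mateC]
          by_cases hac : a + 1 = c + 1
          · have h2 : walk M N u (c+1) = walk M N u c := by rw [← hac]; exact h1
            rw [← h2] at mateC
            exact mate_ne hN mtdC mateC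
          · exact IH c (by omega) (by omega) (a+1) (by omega) h1
        · -- a odd : compare backward N-steps
          have ha2 : a % 2 = 1 := Nat.odd_iff.mp ha
          match a, ha with
          | (d+1), ha =>
            have hd : Even d := by rw [Nat.even_iff]; omega
            obtain ⟨sA, mateA, _⟩ := step_even (u := u) (M := M) hN hd (hok d (by omega))
            have h1 : walk M N u d = walk M N u c := by rw [← mateA, ← mateC, heq]
            exact IH c (by omega) (by omega) d (by omega) h1
      · -- b even, last step an M-step
        have hc2 : c % 2 = 1 := Nat.odd_iff.mp hc
        have hc' : ¬ Even c := by rw [Nat.even_iff]; omega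
        obtain ⟨sC, mateC, mtdC⟩ := step_odd (u := u) (N := N) hM hc' (hok c hcm)
        rcases Nat.even_or_odd a with ha | ha
        · have ha2 : a % 2 = 0 := Nat.even_iff.mp ha
          match a, ha with
          | 0, _ =>
            have h0 : u = walk M N u (c+1) := heq
            rw [← h0] at mtdC
            exact hu mtdC
          | (d+1), ha =>
            have hd : ¬ Even d := by rw [Nat.even_iff]; omega
            obtain ⟨sA, mateA, _⟩ := step_odd (u := u) (N := N) hM hd (hok d (by omega))
            have h1 : walk M N u d = walk M N u c := by rw [← mateA, ← mateC, heq]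
            exact IH c (by omega) (by omega) d (by omega) h1
        · have ha2 : a % 2 = 1 := Nat.odd_iff.mp ha
          have ha' : ¬ Even a := by rw [Nat.even_iff]; omega
          have h1 : walk M N u (a+1) = walk M N u c := by
            rw [walk_succ_odd ha', heq, mateC]
          by_cases hac : a + 1 = c + 1
          · have h2 : walk M N u (c+1) = walk M N u c := by rw [← hac]; exact h1
            rw [← h2] at mateC
            exact mate_ne hM mtdC mateC
          · exact IH c (by omega) (by omega) (a+1) (by omega) h1

lemma walk_injOn (hM : IsMatching G M) (hN : IsMatching G N) (hu : ¬ Mtd M u) {m : ℕ}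
    (hok : ∀ j < m, ok M N u j) :
    ∀ a ≤ m, ∀ b ≤ m, walk M N u a = walk M N u b → a = b := by
  intro a ham b hbm heq
  rcases lt_trichotomy a b with h | h | h
  · exact absurd heq (walk_ne hM hN hu hok b hbm a h)
  · exact h
  · exact absurd heq.symm (walk_ne hM hN hu hok a ham b h)
end Inj

section Stop
open AugAux
variable {V : Type*} [Fintype V] {G : SimpleGraph V} {M N : Finset (Sym2 V)} {u u' : V}

lemma exists_not_ok (hM : IsMatching G M) (hN : IsMatching G N) (hu : ¬ Mtd M u) :
    ∃ m, ¬ ok M N u m := by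
  by_contra h
  push_neg at h
  have hinj : Function.Injective (fun i : Fin (Fintype.card V + 1) => walk M N u i.val) := by
    intro i j hij
    exact Fin.ext (walk_injOn hM hN hu (m := Fintype.card V)
      (fun j _ => h j) i.val (by omega) j.val (by omega) hij)
  have := Fintype.card_le_of_injective _ hinj
  simp at this

/-- the first position where the walk gets stuck. -/
noncomputable def stopW (M N : Finset (Sym2 V)) (u : V) : ℕ :=
  sInf {m | ¬ ok M N u m}

lemma ok_of_lt_stop (hM : IsMatching G M) (hN : IsMatching G N) (hu : ¬ Mtd M u)
    {j : ℕ} (hj : j < stopW M N u) : ok M N u j := by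
  by_contra h
  have h2 : stopW M N u ≤ j := Nat.sInf_le h
  omega

lemma not_ok_stop (hM : IsMatching G M) (hN : IsMatching G N) (hu : ¬ Mtd M u) :
    ¬ ok M N u (stopW M N u) :=
  Nat.sInf_mem (exists_not_ok hM hN hu)

lemma stop_pos (hM : IsMatching G M) (hN : IsMatching G N) (hu1 : Mtd N u)
    (hu : ¬ Mtd M u) : 0 < stopW M N u := by
  rcases Nat.eq_zero_or_pos (stopW M N u) with h | h
  · exfalso
    have := not_ok_stop (N := N) hM hN hu
    rw [h] at this
    exact this (by rw [ok, if_pos (Even.zero)]; exact hu1)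
  · exact h

/-- same-parity intersection of two walks forces the starting vertices to coincide. -/
lemma cross_same (hM : IsMatching G M) (hN : IsMatching G N)
    (hu : ¬ Mtd M u) (hu' : ¬ Mtd M u') :
    ∀ a, ∀ b, a % 2 = b % 2 →
      (∀ j < a, ok M N u j) → (∀ j < b, ok M N u' j) →
      walk M N u a = walk M N u' b → u = u' := by
  intro a
  induction a using Nat.strong_induction_on with
  | _ a IH =>
    intro b hpar hoka hokb heq
    match a, b with
    | 0, 0 => exact heq
    | 0, (d+1) =>
      exfalso
      have hd : ¬ Even d := by rw [Nat.even_iff]; omega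
      obtain ⟨_, _, mtdD⟩ := step_odd (u := u') (N := N) hM hd (hokb d (by omega))
      have h0 : u = walk M N u' (d+1) := heq
      rw [← h0] at mtdD
      exact hu mtdD
    | (c+1), 0 =>
      exfalso
      have hc : ¬ Even c := by rw [Nat.even_iff]; omega
      obtain ⟨_, _, mtdC⟩ := step_odd (u := u) (N := N) hM hc (hoka c (by omega))
      have h0 : walk M N u (c+1) = u' := heq
      rw [h0] at mtdC
      exact hu' mtdC
    | (c+1), (d+1) =>
      rcases Nat.even_or_odd c with hc | hc
      · have hd : Even d := by
          rw [Nat.even_iff] at hc ⊢; omega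
        obtain ⟨_, mateC, _⟩ := step_even (u := u) (M := M) hN hc (hoka c (by omega))
        obtain ⟨_, mateD, _⟩ := step_even (u := u') (M := M) hN hd (hokb d (by omega))
        have h1 : walk M N u c = walk M N u' d := by rw [← mateC, ← mateD, heq]
        exact IH c (by omega) d (by rw [Nat.even_iff] at hc hd; omega)
          (fun j hj => hoka j (by omega)) (fun j hj => hokb j (by omega)) h1
      · have hc' : ¬ Even c := Nat.not_even_iff_odd.mpr hc
        have hd' : ¬ Even d := by
          rw [Nat.even_iff]; rw [Nat.odd_iff] at hc; omega
        obtain ⟨_, mateC, _⟩ := step_odd (u := u) (N := N) hM hc' (hoka c (by omega))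
        obtain ⟨_, mateD, _⟩ := step_odd (u := u') (N := N) hM hd' (hokb d (by omega))
        have h1 : walk M N u c = walk M N u' d := by rw [← mateC, ← mateD, heq]
        exact IH c (by omega) d (by rw [Nat.odd_iff] at hc; rw [Nat.even_iff] at hd'; omega)
          (fun j hj => hoka j (by omega)) (fun j hj => hokb j (by omega)) h1

/-- mixed-parity intersection: the first walk continues along the reverse of the second. -/
lemma cross_chain (hM : IsMatching G M) (hN : IsMatching G N)
    {a b : ℕ} (hpar : a % 2 ≠ b % 2)
    (hokb : ∀ j < b, ok M N u' j)
    (heq : walk M N u a = walk M N u' b) :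
    ∀ j ≤ b, walk M N u (a + j) = walk M N u' (b - j) := by
  intro j
  induction j with
  | zero => intro _; simpa using heq
  | succ j IHj =>
    intro hjb
    have hIH := IHj (by omega)
    set d := b - j with hd
    have hd1 : 1 ≤ d := by omega
    rcases Nat.even_or_odd (a + j) with haj | haj
    · -- a+j even, so d odd; forward N-step matches backward N-step
      have haj2 : (a + j) % 2 = 0 := Nat.even_iff.mp haj
      have hde : Even (d - 1) := Nat.even_iff.mpr (by omega)
      obtain ⟨_, mateD, _⟩ := step_even (u := u') (M := M) hN hde (hokb (d-1) (by omega))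
      rw [show d - 1 + 1 = d from by omega] at mateD
      have : walk M N u (a + j + 1) = walk M N u' (d - 1) := by
        rw [walk_succ_even haj, hIH, mateD]
      rw [show a + (j+1) = a + j + 1 from by omega, show b - (j+1) = d - 1 from by omega]
      exact this
    · have haj' : ¬ Even (a + j) := Nat.not_even_iff_odd.mpr haj
      have haj2 : (a + j) % 2 = 1 := Nat.odd_iff.mp haj
      have hde : ¬ Even (d - 1) := by rw [Nat.even_iff]; omega
      obtain ⟨_, mateD, _⟩ := step_odd (u := u') (N := N) hM hde (hokb (d-1) (by omega))
      rw [show d - 1 + 1 = d from by omega] at mateD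
      have : walk M N u (a + j + 1) = walk M N u' (d - 1) := by
        rw [walk_succ_odd haj', hIH, mateD]
      rw [show a + (j+1) = a + j + 1 from by omega, show b - (j+1) = d - 1 from by omega]
      exact this
end Stop

section Rev
open AugAux
variable {V : Type*} [Fintype V] {G : SimpleGraph V} {M N : Finset (Sym2 V)} {u u' : V}

lemma cross_mixed (hM : IsMatching G M) (hN : IsMatching G N)
    (hu1 : Mtd N u) (hu2 : ¬ Mtd M u) (hu2' : ¬ Mtd M u')
    {a b : ℕ} (ha : a ≤ stopW M N u) (hb : b ≤ stopW M N u')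
    (hpar : a % 2 ≠ b % 2) (heq : walk M N u a = walk M N u' b) :
    walk M N u (stopW M N u) = u' := by
  set S := stopW M N u with hS
  have hokb : ∀ j < b, ok M N u' j := fun j hj => ok_of_lt_stop hM hN hu2' (by omega)
  have hchain := cross_chain (u := u) (u' := u') hM hN hpar hokb heq
  have hend : walk M N u (a + b) = u' := by
    have := hchain b (le_refl b)
    rw [Nat.sub_self] at this
    exact this
  have hSab : S ≤ a + b := by
    by_contra hlt
    have hok := ok_of_lt_stop hM hN hu2 (show a + b < S by omega)
    have hab : ¬ Even (a + b) := by rw [Nat.even_iff]; omega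
    rw [ok, if_neg hab, hend] at hok
    exact hu2' hok
  have hj0 : S - a ≤ b := by omega
  have h1 : walk M N u S = walk M N u' (b - (S - a)) := by
    have := hchain (S - a) hj0
    rw [show a + (S - a) = S from by omega] at this
    exact this
  set d0 := b - (S - a) with hd0
  have hnot := not_ok_stop (N := N) hM hN hu2
  rcases Nat.eq_zero_or_pos d0 with h | h
  · rw [h] at h1
    exact h1
  · exfalso
    rcases Nat.even_or_odd S with hSe | hSo
    · -- S even, d0 odd
      have hS2 : S % 2 = 0 := Nat.even_iff.mp hSe
      have hde : Even (d0 - 1) := Nat.even_iff.mpr (by omega)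
      obtain ⟨_, _, mtdD⟩ := step_even (u := u') (M := M) hN hde
        (hokb (d0 - 1) (by omega))
      rw [show d0 - 1 + 1 = d0 from by omega] at mtdD
      rw [ok, if_pos hSe] at hnot
      rw [h1] at hnot
      exact hnot mtdD
    · have hS2 : S % 2 = 1 := Nat.odd_iff.mp hSo
      have hde : ¬ Even (d0 - 1) := by rw [Nat.even_iff]; omega
      obtain ⟨_, _, mtdD⟩ := step_odd (u := u') (N := N) hM hde
        (hokb (d0 - 1) (by omega))
      rw [show d0 - 1 + 1 = d0 from by omega] at mtdD
      rw [ok, if_neg (Nat.not_even_iff_odd.mpr hSo)] at hnot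
      rw [h1] at hnot
      exact hnot mtdD

/-- two walks intersecting: either same start, or the first ends at the second's start. -/
lemma cross_cases (hM : IsMatching G M) (hN : IsMatching G N)
    (hu1 : Mtd N u) (hu2 : ¬ Mtd M u) (hu2' : ¬ Mtd M u')
    {a b : ℕ} (ha : a ≤ stopW M N u) (hb : b ≤ stopW M N u')
    (heq : walk M N u a = walk M N u' b) :
    u = u' ∨ walk M N u (stopW M N u) = u' := by
  by_cases hpar : a % 2 = b % 2
  · exact Or.inl (cross_same hM hN hu2 hu2' a b hpar
      (fun j hj => ok_of_lt_stop hM hN hu2 (by omega))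
      (fun j hj => ok_of_lt_stop hM hN hu2' (by omega)) heq)
  · exact Or.inr (cross_mixed hM hN hu1 hu2 hu2' ha hb hpar heq)

variable (hM : IsMatching G M) (hN : IsMatching G N) (hu1 : Mtd N u) (hu2 : ¬ Mtd M u)
  (hodd : stopW M N u % 2 = 1)

include hM hN hu1 hu2 hodd

lemma walk_rev :
    ∀ j ≤ stopW M N u, walk M N (walk M N u (stopW M N u)) j
      = walk M N u (stopW M N u - j) := by
  set S := stopW M N u with hS
  set u' := walk M N u S with hu'
  intro j
  induction j with
  | zero => intro _; rfl
  | succ j IHj =>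
    intro hjS
    have hIH := IHj (by omega)
    rcases Nat.even_or_odd j with hj | hj
    · have hj2 : j % 2 = 0 := Nat.even_iff.mp hj
      have he : Even (S - j - 1) := Nat.even_iff.mpr (by omega)
      obtain ⟨_, mateD, _⟩ := step_even (u := u) (M := M) hN he
        (ok_of_lt_stop hM hN hu2 (show S - j - 1 < S by omega))
      rw [show S - j - 1 + 1 = S - j from by omega] at mateD
      rw [walk_succ_even hj, hIH, mateD, show S - j - 1 = S - (j+1) from by omega]
    · have hj2 : j % 2 = 1 := Nat.odd_iff.mp hj
      have he : ¬ Even (S - j - 1) := by rw [Nat.even_iff]; omega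
      obtain ⟨_, mateD, _⟩ := step_odd (u := u) (N := N) hM he
        (ok_of_lt_stop hM hN hu2 (show S - j - 1 < S by omega))
      rw [show S - j - 1 + 1 = S - j from by omega] at mateD
      rw [walk_succ_odd (Nat.not_even_iff_odd.mpr hj), hIH, mateD,
        show S - j - 1 = S - (j+1) from by omega]

lemma mtd_N_end : Mtd N (walk M N u (stopW M N u)) := by
  set S := stopW M N u with hS
  have he : Even (S - 1) := Nat.even_iff.mpr (by omega)
  obtain ⟨_, _, mtdD⟩ := step_even (u := u) (M := M) hN he
    (ok_of_lt_stop hM hN hu2 (show S - 1 < S by omega))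
  rw [show S - 1 + 1 = S from by omega] at mtdD
  exact mtdD

lemma not_mtd_M_end : ¬ Mtd M (walk M N u (stopW M N u)) := by
  have hnot := not_ok_stop (N := N) hM hN hu2
  rw [ok, if_neg (by rw [Nat.even_iff]; omega)] at hnot
  exact hnot

lemma ok_rev : ∀ j < stopW M N u, ok M N (walk M N u (stopW M N u)) j := by
  set S := stopW M N u with hS
  intro j hj
  have hwr := walk_rev hM hN hu1 hu2 hodd j (by omega)
  rcases Nat.even_or_odd j with hje | hjo
  · have hj2 : j % 2 = 0 := Nat.even_iff.mp hje
    rw [ok, if_pos hje, hwr]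
    have he : Even (S - j - 1) := Nat.even_iff.mpr (by omega)
    obtain ⟨_, _, mtdD⟩ := step_even (u := u) (M := M) hN he
      (ok_of_lt_stop hM hN hu2 (show S - j - 1 < S by omega))
    rw [show S - j - 1 + 1 = S - j from by omega] at mtdD
    exact mtdD
  · have hj2 : j % 2 = 1 := Nat.odd_iff.mp hjo
    rw [ok, if_neg (Nat.not_even_iff_odd.mpr hjo), hwr]
    have he : ¬ Even (S - j - 1) := by rw [Nat.even_iff]; omega
    obtain ⟨_, _, mtdD⟩ := step_odd (u := u) (N := N) hM he
      (ok_of_lt_stop hM hN hu2 (show S - j - 1 < S by omega))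
    rw [show S - j - 1 + 1 = S - j from by omega] at mtdD
    exact mtdD

lemma stop_rev : stopW M N (walk M N u (stopW M N u)) = stopW M N u := by
  set S := stopW M N u with hS
  have hnotok : ¬ ok M N (walk M N u S) S := by
    rw [ok, if_neg (by rw [Nat.even_iff]; omega)]
    rw [walk_rev hM hN hu1 hu2 hodd S (le_refl S)]
    rw [Nat.sub_self]
    exact hu2
  have h1 : stopW M N (walk M N u S) ≤ S := Nat.sInf_le hnotok
  rcases h1.lt_or_eq with h | h
  · exfalso
    have hu2' : ¬ Mtd M (walk M N u S) := not_mtd_M_end hM hN hu1 hu2 hodd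
    exact not_ok_stop (N := N) hM hN hu2' (ok_rev hM hN hu1 hu2 hodd _ h)
  · exact h

lemma end_end : walk M N (walk M N u (stopW M N u)) (stopW M N (walk M N u (stopW M N u))) = u := by
  rw [stop_rev hM hN hu1 hu2 hodd]
  rw [walk_rev hM hN hu1 hu2 hodd _ (le_refl _), Nat.sub_self]
  rfl
end Rev

section Aug
open AugAux
variable {V : Type*} [Fintype V] {G : SimpleGraph V} {M N : Finset (Sym2 V)} {u u' : V}

lemma isAugPath_walk (hM : IsMatching G M) (hN : IsMatching G N)
    (hu1 : Mtd N u) (hu2 : ¬ Mtd M u) {i : ℕ} (hstop : stopW M N u = 2*i+1) :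
    IsAugPath G M i (walk M N u) := by
  have hok : ∀ j < 2*i+1, ok M N u j := fun j hj => ok_of_lt_stop hM hN hu2 (by omega)
  refine ⟨?_, ?_, ?_, ?_, ?_⟩
  · intro a b ha hb heq
    exact walk_injOn hM hN hu2 (m := 2*i+1) hok a ha b hb heq
  · intro e he hv
    exact hu2 (mtd_iff.mpr ⟨e, he, hv⟩)
  · intro e he hv
    have hnot := not_ok_stop (N := N) hM hN hu2
    rw [hstop, ok, if_neg (by rw [Nat.even_iff]; omega)] at hnot
    exact hnot (mtd_iff.mpr ⟨e, he, hv⟩)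
  · intro i' hi'
    have he2 : Even (2*i') := even_two_mul i'
    obtain ⟨sN, mateN', mtd'⟩ := step_even (u := u) (M := M) hN he2 (hok _ (by omega))
    constructor
    · exact (SimpleGraph.mem_edgeSet G).mp (hN.1 _ sN)
    · intro hmem
      have hmtd : Mtd M (walk M N u (2*i')) := ⟨_, hmem⟩
      rcases Nat.eq_zero_or_pos i' with hi0 | hi0
      · subst hi0
        simp only [Nat.mul_zero] at hmtd
        exact hu2 hmtd
      · have hj : ¬ Even (2*i'-1) := by rw [Nat.even_iff]; omega
        obtain ⟨_, mateM', _⟩ := step_odd (u := u) (N := N) hM hj (hok _ (by omega))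
        rw [show 2*i'-1+1 = 2*i' from by omega] at mateM'
        have hme : mate M (walk M N u (2*i')) = walk M N u (2*i'+1) := mate_eq hM hmem
        have heq2 : walk M N u (2*i'+1) = walk M N u (2*i'-1) := by
          rw [← hme, mateM']
        have := walk_injOn hM hN hu2 (m := 2*i+1) hok (2*i'+1) (by omega)
          (2*i'-1) (by omega) heq2
        omega
  · intro i' h1 hi'
    have hj : ¬ Even (2*i'-1) := by rw [Nat.even_iff]; omega
    obtain ⟨sM, _, _⟩ := step_odd (u := u) (N := N) hM hj (hok _ (by omega))
    rw [show 2*i'-1+1 = 2*i' from by omega] at sM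
    exact sM

/-- the set of matched vertices. -/
noncomputable def suppF {V : Type*} [Fintype V] (M : Finset (Sym2 V)) : Finset V :=
  Finset.univ.filter (fun v => Mtd M v)

lemma card_suppF : ∀ M : Finset (Sym2 V), IsMatching G M → (suppF M).card = 2 * M.card := by
  intro M
  induction M using Finset.induction_on with
  | empty => intro _; simp [suppF, Mtd]
  | @insert e M hnm IH =>
    intro hM
    have hMsub : IsMatching G M :=
      ⟨fun e' he' => hM.1 e' (Finset.mem_insert_of_mem he'),
       fun e' he' f hf hne v => hM.2 e' (Finset.mem_insert_of_mem he') f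
         (Finset.mem_insert_of_mem hf) hne v⟩
    induction e with
    | _ x y =>
      have hadj : G.Adj x y := (SimpleGraph.mem_edgeSet G).mp
        (hM.1 _ (Finset.mem_insert_self _ _))
      have hxy : x ≠ y := hadj.ne
      have hx : ¬ Mtd M x := by
        rintro ⟨w, hw⟩
        have hne : s(x, y) ≠ s(x, w) := by
          intro h; rw [h] at hnm; exact hnm hw
        exact hM.2 _ (Finset.mem_insert_self _ _) _ (Finset.mem_insert_of_mem hw)
          hne x (Sym2.mem_mk_left _ _) (Sym2.mem_mk_left _ _)
      have hy : ¬ Mtd M y := by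
        rintro ⟨w, hw⟩
        have hne : s(x, y) ≠ s(y, w) := by
          intro h; rw [h] at hnm; exact hnm hw
        exact hM.2 _ (Finset.mem_insert_self _ _) _ (Finset.mem_insert_of_mem hw)
          hne y (Sym2.mem_mk_right _ _) (Sym2.mem_mk_left _ _)
      have hset : suppF (insert s(x, y) M) = insert x (insert y (suppF M)) := by
        ext v
        simp only [suppF, Finset.mem_filter, Finset.mem_univ, true_and, Finset.mem_insert]
        constructor
        · rintro ⟨w, hw⟩
          rcases Finset.mem_insert.mp hw with h | h
          · rcases Sym2.eq_iff.mp h with ⟨rfl, rfl⟩ | ⟨rfl, rfl⟩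
            · exact Or.inl rfl
            · exact Or.inr (Or.inl rfl)
          · exact Or.inr (Or.inr ⟨w, h⟩)
        · rintro (rfl | rfl | ⟨w, hw⟩)
          · exact ⟨y, Finset.mem_insert_self _ _⟩
          · exact ⟨x, by rw [Sym2.eq_swap]; exact Finset.mem_insert_self _ _⟩
          · exact ⟨w, Finset.mem_insert_of_mem hw⟩
      have hyn : y ∉ suppF M := by simp [suppF, hy]
      have hxn : x ∉ insert y (suppF M) := by simp [suppF, hx, hxy]
      rw [hset, Finset.card_insert_of_notMem hxn, Finset.card_insert_of_notMem hyn,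
        IH hMsub, Finset.card_insert_of_notMem hnm]
      ring

lemma two_mul_card_le (hM : IsMatching G M) : 2 * M.card ≤ Fintype.card V := by
  rw [← card_suppF M hM]
  exact (Finset.card_le_card (Finset.subset_univ _)).trans_eq (Finset.card_univ)
end Aug

open AugAux

set_option maxHeartbeats 3000000 in
/-- If for every `i ∈ {0,…,⌈1/γ⌉}` every collection of pairwise vertex-disjoint
augmenting paths of length `2i+1` w.r.t. `M` has size at most `γ²·n`, then
`μ(G) ≤ |M| + 3·γ·n`. -/
theorem stmt_15 {V : Type*} [Fintype V] (G : SimpleGraph V) (n : ℕ)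
    (hn : Fintype.card V = n)
    (γ : ℝ) (hγ0 : 0 < γ) (hγ1 : γ ≤ 1/2)
    (M : Finset (Sym2 V)) (hM : IsMatching G M)
    (hpaths : ∀ i ≤ ⌈1/γ⌉₊, ∀ P : Finset (ℕ → V),
      (∀ p ∈ P, IsAugPath G M i p) →
      (∀ p ∈ P, ∀ q ∈ P, p ≠ q → ∀ a ≤ 2*i+1, ∀ b ≤ 2*i+1, p a ≠ q b) →
      (P.card : ℝ) ≤ γ ^ 2 * n) :
    (matchNum G : ℝ) ≤ (M.card : ℝ) + 3 * γ * n := by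
  classical
  -- a maximum matching N
  have h0 : (0 : ℕ) ∈ {k | ∃ M' : Finset (Sym2 V), IsMatching G M' ∧ M'.card = k} :=
    ⟨∅, ⟨fun e he => absurd he (Finset.notMem_empty e),
      fun e he => absurd he (Finset.notMem_empty e)⟩, Finset.card_empty⟩
  have hbdd : BddAbove {k | ∃ M' : Finset (Sym2 V), IsMatching G M' ∧ M'.card = k} := by
    refine ⟨n, ?_⟩
    rintro x ⟨N, hN, rfl⟩
    have := two_mul_card_le hN
    rw [hn] at this
    omega
  obtain ⟨N, hN, hNcard⟩ := Nat.sSup_mem ⟨0, h0⟩ hbdd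
  have hNc : matchNum G = N.card := hNcard.symm
  rw [hNc]
  -- basic membership notation
  set k := ⌈1/γ⌉₊ with hk
  set U : Finset V := Finset.univ.filter (fun v => Mtd N v ∧ ¬ Mtd M v) with hUdef
  set W : Finset V := Finset.univ.filter (fun v => Mtd M v ∧ ¬ Mtd N v) with hWdef
  have hmemU : ∀ u ∈ U, Mtd N u ∧ ¬ Mtd M u := by
    intro u hu; rw [hUdef, Finset.mem_filter] at hu; exact hu.2
  -- cardinality balance
  have hUW : U.card + 2 * M.card = W.card + 2 * N.card := by
    have hUs : U = suppF N \ suppF M := by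
      ext v
      simp [hUdef, suppF, Finset.mem_sdiff]
    have hWs : W = suppF M \ suppF N := by
      ext v
      simp [hWdef, suppF, Finset.mem_sdiff]
    have h1 := Finset.card_sdiff_add_card (suppF N) (suppF M)
    have h2 := Finset.card_sdiff_add_card (suppF M) (suppF N)
    rw [Finset.union_comm] at h2
    rw [hUs, hWs, ← card_suppF M hM, ← card_suppF N hN]
    omega
  set T : Finset V := U.filter (fun u => stopW M N u % 2 = 1) with hTdef
  set B : Finset V := U.filter (fun u => ¬ (stopW M N u % 2 = 1)) with hBdef
  have hsplit : T.card + B.card = U.card :=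
    Finset.card_filter_add_card_filter_not _
  -- the ends of "bad" walks injectively land in W
  have hBW : B.card ≤ W.card := by
    apply Finset.card_le_card_of_injOn (fun u => walk M N u (stopW M N u))
    · intro u hu
      simp only [Finset.mem_coe, hBdef, Finset.mem_filter] at hu
      obtain ⟨hu1, hu2⟩ := hmemU u hu.1
      have hpos := stop_pos hM hN hu1 hu2
      have hpar : stopW M N u % 2 = 0 := by omega
      have hodd : ¬ Even (stopW M N u - 1) := by rw [Nat.even_iff]; omega
      obtain ⟨_, _, mtdD⟩ := step_odd (u := u) (N := N) hM hodd
        (ok_of_lt_stop hM hN hu2 (by omega))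
      rw [show stopW M N u - 1 + 1 = stopW M N u from by omega] at mtdD
      have hnot := not_ok_stop (N := N) hM hN hu2
      rw [ok, if_pos (Nat.even_iff.mpr hpar)] at hnot
      simp only [Finset.mem_coe, hWdef, Finset.mem_filter]
      exact ⟨Finset.mem_univ _, mtdD, hnot⟩
    · intro u hu u' hu' heq
      simp only [Finset.mem_coe, hBdef, Finset.mem_filter] at hu hu'
      obtain ⟨hu1, hu2⟩ := hmemU u hu.1
      obtain ⟨hu1', hu2'⟩ := hmemU u' hu'.1
      exact cross_same hM hN hu2 hu2' _ _ (by omega)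
        (fun j hj => ok_of_lt_stop hM hN hu2 (by omega))
        (fun j hj => ok_of_lt_stop hM hN hu2' (by omega)) heq
  have hkey : 2 * N.card ≤ T.card + 2 * M.card := by omega
  -- facts about members of T
  have hmemT : ∀ u ∈ T, Mtd N u ∧ ¬ Mtd M u ∧ stopW M N u % 2 = 1 := by
    intro u hu
    rw [hTdef, Finset.mem_filter] at hu
    exact ⟨(hmemU u hu.1).1, (hmemU u hu.1).2, hu.2⟩
  have hendT : ∀ u ∈ T, walk M N u (stopW M N u) ∈ T := by
    intro u hu
    obtain ⟨hu1, hu2, hodd⟩ := hmemT u hu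
    rw [hTdef, Finset.mem_filter, hUdef, Finset.mem_filter]
    refine ⟨⟨Finset.mem_univ _, mtd_N_end hM hN hu1 hu2 hodd,
      not_mtd_M_end hM hN hu1 hu2 hodd⟩, ?_⟩
    rw [stop_rev hM hN hu1 hu2 hodd]
    exact hodd
  have hendend : ∀ u ∈ T,
      walk M N (walk M N u (stopW M N u)) (stopW M N (walk M N u (stopW M N u))) = u := by
    intro u hu
    obtain ⟨hu1, hu2, hodd⟩ := hmemT u hu
    exact end_end hM hN hu1 hu2 hodd
  have hendne : ∀ u ∈ T, walk M N u (stopW M N u) ≠ u := by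
    intro u hu heq
    obtain ⟨hu1, hu2, hodd⟩ := hmemT u hu
    have h0 : walk M N u (stopW M N u) = walk M N u 0 := heq
    have := walk_injOn hM hN hu2 (m := stopW M N u)
      (fun j hj => ok_of_lt_stop hM hN hu2 hj) _ (le_refl _) 0 (by omega) h0
    omega
  -- halving T by the end-involution
  set enc : V → ℕ := fun v => ((Fintype.equivFin V) v : ℕ) with henc
  have hencinj : ∀ v v', enc v = enc v' → v = v' := by
    intro v v' h
    exact (Fintype.equivFin V).injective (Fin.ext h)
  set T' : Finset V := T.filter (fun u => enc u < enc (walk M N u (stopW M N u))) with hT'def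
  set T'' : Finset V := T.filter (fun u => ¬ enc u < enc (walk M N u (stopW M N u))) with hT''def
  have hsplit2 : T'.card + T''.card = T.card :=
    Finset.card_filter_add_card_filter_not _
  have hbij : T''.card = T'.card := by
    apply Finset.card_bij (fun u _ => walk M N u (stopW M N u))
    · intro u hu
      rw [hT''def, Finset.mem_filter] at hu
      rw [hT'def, Finset.mem_filter]
      refine ⟨hendT u hu.1, ?_⟩
      rw [hendend u hu.1]
      rcases lt_or_ge (enc (walk M N u (stopW M N u))) (enc u) with h | h
      · exact h
      · exfalso
        have := hu.2
        have hne : enc u ≠ enc (walk M N u (stopW M N u)) :=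
          fun hh => (hendne u hu.1) (hencinj _ _ hh.symm)
        omega
    · intro u hu u' hu' heq
      rw [hT''def, Finset.mem_filter] at hu hu'
      rw [← hendend u hu.1, ← hendend u' hu'.1, heq]
    · intro v hv
      rw [hT'def, Finset.mem_filter] at hv
      refine ⟨walk M N v (stopW M N v), ?_, hendend v hv.1⟩
      rw [hT''def, Finset.mem_filter]
      refine ⟨hendT v hv.1, ?_⟩
      rw [hendend v hv.1]
      omega
  -- paths from distinct representatives are vertex-disjoint
  have hdisj : ∀ u ∈ T', ∀ u' ∈ T', u ≠ u' → ∀ a ≤ stopW M N u, ∀ b ≤ stopW M N u',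
      walk M N u a ≠ walk M N u' b := by
    intro u hu u' hu' hne a ha b hb heq
    rw [hT'def, Finset.mem_filter] at hu hu'
    obtain ⟨hu1, hu2, hodd⟩ := hmemT u hu.1
    obtain ⟨hu1', hu2', hodd'⟩ := hmemT u' hu'.1
    rcases cross_cases hM hN hu1 hu2 hu2' ha hb heq with h | h
    · exact hne h
    · -- endW u = u' : contradicts that both are the smaller of their pairs
      have h2 := hu'.2
      rw [← h] at h2
      rw [hendend u hu.1] at h2
      have h3 := hu.2
      rw [h] at h3
      omega
  -- split T' into short and long stopping times
  set Tle : Finset V := T'.filter (fun u => (stopW M N u - 1)/2 ≤ k) with hTledef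
  set Tgt : Finset V := T'.filter (fun u => ¬ (stopW M N u - 1)/2 ≤ k) with hTgtdef
  have hsplit3 : Tle.card + Tgt.card = T'.card :=
    Finset.card_filter_add_card_filter_not _
  have hstodd : ∀ u ∈ T', stopW M N u = 2*((stopW M N u - 1)/2) + 1 := by
    intro u hu
    rw [hT'def, Finset.mem_filter] at hu
    have := (hmemT u hu.1).2.2
    omega
  -- each short class has at most γ²n elements
  have hclass : ∀ i ≤ k, ((T'.filter (fun u => (stopW M N u - 1)/2 = i)).card : ℝ)
      ≤ γ^2 * n := by
    intro i hik
    set Ti := T'.filter (fun u => (stopW M N u - 1)/2 = i) with hTidef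
    have hTsub : ∀ u ∈ Ti, u ∈ T' ∧ stopW M N u = 2*i+1 := by
      intro u hu
      rw [hTidef, Finset.mem_filter] at hu
      refine ⟨hu.1, ?_⟩
      have := hstodd u hu.1
      omega
    have hcardim : (Ti.image (fun u => walk M N u)).card = Ti.card := by
      apply Finset.card_image_of_injOn
      intro u hu u' hu' heq
      exact congrFun heq 0
    rw [← hcardim]
    apply hpaths i hik
    · intro p hp
      rw [Finset.mem_image] at hp
      obtain ⟨u, hu, rfl⟩ := hp
      obtain ⟨hu', hst⟩ := hTsub u hu
      rw [hT'def, Finset.mem_filter] at hu'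
      obtain ⟨h1, h2, _⟩ := hmemT u hu'.1
      exact isAugPath_walk hM hN h1 h2 hst
    · intro p hp q hq hpq a ha b hb
      rw [Finset.mem_image] at hp hq
      obtain ⟨u, hu, rfl⟩ := hp
      obtain ⟨u', hu', rfl⟩ := hq
      have hne : u ≠ u' := fun hh => hpq (by rw [hh])
      obtain ⟨hT1, hst⟩ := hTsub u hu
      obtain ⟨hT1', hst'⟩ := hTsub u' hu'
      exact hdisj u hT1 u' hT1' hne a (by omega) b (by omega)
  -- sum over the short classes
  have hTle : (Tle.card : ℝ) ≤ ((k:ℝ)+1) * (γ^2 * n) := by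
    have hTleB : Tle = (Finset.range (k+1)).biUnion
        (fun i => T'.filter (fun u => (stopW M N u - 1)/2 = i)) := by
      ext u
      simp only [Finset.mem_biUnion, Finset.mem_range, hTledef, Finset.mem_filter]
      constructor
      · rintro ⟨h1, h2⟩; exact ⟨_, by omega, h1, rfl⟩
      · rintro ⟨i, hi, h1, h2⟩; exact ⟨h1, by omega⟩
    have hdisjcl : ∀ x ∈ Finset.range (k+1), ∀ y ∈ Finset.range (k+1), x ≠ y →
        Disjoint (T'.filter (fun u => (stopW M N u - 1)/2 = x))
          (T'.filter (fun u => (stopW M N u - 1)/2 = y)) := by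
      intro x _ y _ hxy
      rw [Finset.disjoint_left]
      intro u hu1 hu2
      rw [Finset.mem_filter] at hu1 hu2
      exact hxy (hu1.2.symm.trans hu2.2)
    rw [hTleB, Finset.card_biUnion hdisjcl]
    push_cast
    calc (∑ i ∈ Finset.range (k+1),
            ((T'.filter (fun u => (stopW M N u - 1)/2 = i)).card : ℝ))
        ≤ ∑ i ∈ Finset.range (k+1), γ^2*n :=
          Finset.sum_le_sum (fun i hi => hclass i (by
            rw [Finset.mem_range] at hi; omega))
      _ = ((k:ℝ)+1) * (γ^2*n) := by
          rw [Finset.sum_const, Finset.card_range]; push_cast; ring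
  -- long paths eat up many edges of M
  have hlong : (k+1) * Tgt.card ≤ M.card := by
    set edgesOf : V → Finset (Sym2 V) := fun u =>
      (Finset.range ((stopW M N u - 1)/2)).image
        (fun l => s(walk M N u (2*l+1), walk M N u (2*l+2))) with hedef
    have hTgtT' : ∀ u ∈ Tgt, u ∈ T' := by
      intro u hu; rw [hTgtdef, Finset.mem_filter] at hu; exact hu.1
    have hsubM : ∀ u ∈ Tgt, edgesOf u ⊆ M := by
      intro u hu e he
      rw [hedef] at he
      simp only [Finset.mem_image, Finset.mem_range] at he
      obtain ⟨l, hl, rfl⟩ := he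
      have hu' := hTgtT' u hu
      obtain ⟨h1, h2, hodd⟩ := hmemT u
        (by rw [hT'def, Finset.mem_filter] at hu'; exact hu'.1)
      have hst := hstodd u hu'
      have hne2 : ¬ Even (2*l+1) := by rw [Nat.even_iff]; omega
      obtain ⟨sM, _, _⟩ := step_odd (u := u) (N := N) hM hne2
        (ok_of_lt_stop hM hN h2 (by omega))
      rw [show 2*l+1+1 = 2*l+2 from by omega] at sM
      exact sM
    have hcardE : ∀ u ∈ Tgt, (edgesOf u).card = (stopW M N u - 1)/2 := by
      intro u hu
      have hu' := hTgtT' u hu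
      obtain ⟨h1, h2, hodd⟩ := hmemT u
        (by rw [hT'def, Finset.mem_filter] at hu'; exact hu'.1)
      have hst := hstodd u hu'
      have hinj := walk_injOn hM hN h2 (m := stopW M N u)
        (fun j hj => ok_of_lt_stop hM hN h2 hj)
      have hinj2 : Set.InjOn (fun l => s(walk M N u (2*l+1), walk M N u (2*l+2)))
          (Finset.range ((stopW M N u - 1)/2)) := by
        intro l hl l' hl' heq
        rw [Finset.mem_coe, Finset.mem_range] at hl hl'
        rcases Sym2.eq_iff.mp heq with ⟨e1, e2⟩ | ⟨e1, e2⟩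
        · have := hinj (2*l+1) (by omega) (2*l'+1) (by omega) e1; omega
        · have := hinj (2*l+1) (by omega) (2*l'+2) (by omega) e1; omega
      rw [hedef]
      simp only
      rw [Finset.card_image_of_injOn hinj2, Finset.card_range]
    have hdisjE : ∀ x ∈ Tgt, ∀ y ∈ Tgt, x ≠ y → Disjoint (edgesOf x) (edgesOf y) := by
      intro x hx y hy hxy
      rw [Finset.disjoint_left]
      intro e hex hey
      rw [hedef] at hex hey
      simp only [Finset.mem_image, Finset.mem_range] at hex hey
      obtain ⟨l, hl, he1⟩ := hex
      obtain ⟨l', hl', he2⟩ := hey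
      have hstx := hstodd x (hTgtT' x hx)
      have hsty := hstodd y (hTgtT' y hy)
      have heq : s(walk M N x (2*l+1), walk M N x (2*l+2))
          = s(walk M N y (2*l'+1), walk M N y (2*l'+2)) := by rw [he1, he2]
      rcases Sym2.eq_iff.mp heq with ⟨e1, _⟩ | ⟨e1, _⟩
      · exact hdisj x (hTgtT' x hx) y (hTgtT' y hy) hxy (2*l+1) (by omega)
          (2*l'+1) (by omega) e1
      · exact hdisj x (hTgtT' x hx) y (hTgtT' y hy) hxy (2*l+1) (by omega)
          (2*l'+2) (by omega) e1
    have hbU : Tgt.biUnion edgesOf ⊆ M := by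
      intro e he
      rw [Finset.mem_biUnion] at he
      obtain ⟨u, hu, he⟩ := he
      exact hsubM u hu he
    have h1 : (Tgt.biUnion edgesOf).card = ∑ u ∈ Tgt, (edgesOf u).card :=
      Finset.card_biUnion hdisjE
    have h2 : Tgt.card • (k+1) ≤ ∑ u ∈ Tgt, (edgesOf u).card := by
      apply Finset.card_nsmul_le_sum
      intro u hu
      rw [hcardE u hu]
      have hu2 := hu
      rw [hTgtdef, Finset.mem_filter] at hu2
      omega
    have h3 : (Tgt.biUnion edgesOf).card ≤ M.card := Finset.card_le_card hbU
    rw [smul_eq_mul] at h2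
    calc (k+1) * Tgt.card = Tgt.card * (k+1) := mul_comm _ _
      _ ≤ ∑ u ∈ Tgt, (edgesOf u).card := h2
      _ = (Tgt.biUnion edgesOf).card := h1.symm
      _ ≤ M.card := h3
  -- final arithmetic
  have hMn : 2 * M.card ≤ n := by
    have := two_mul_card_le hM; rw [hn] at this; exact this
  have hkey2 : (N.card : ℝ) ≤ (M.card : ℝ) + T'.card := by
    have hh : 2*N.card ≤ 2*T'.card + 2*M.card := by omega
    have := (Nat.cast_le (α := ℝ)).mpr hh
    push_cast at this
    linarith
  have hceil : (1/γ : ℝ) ≤ (k : ℝ) := Nat.le_ceil _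
  have hceil2 : (k : ℝ) < 1/γ + 1 := Nat.ceil_lt_add_one (by positivity)
  have hγk : (1:ℝ) ≤ γ * ((k:ℝ)+1) := by
    have h3 : γ * (1/γ) = 1 := by field_simp
    nlinarith
  have hTgtR : ((Tgt.card : ℕ) : ℝ) ≤ γ * M.card := by
    have hc : ((k:ℝ)+1) * Tgt.card ≤ (M.card : ℝ) := by
      have := (Nat.cast_le (α := ℝ)).mpr hlong
      push_cast at this
      linarith
    calc ((Tgt.card : ℕ) : ℝ) = 1 * Tgt.card := (one_mul _).symm
      _ ≤ (γ*((k:ℝ)+1)) * Tgt.card :=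
          mul_le_mul_of_nonneg_right hγk (Nat.cast_nonneg _)
      _ = γ * (((k:ℝ)+1) * Tgt.card) := by ring
      _ ≤ γ * M.card := mul_le_mul_of_nonneg_left hc hγ0.le
  have hfin : (T'.card : ℝ) ≤ ((k:ℝ)+1)*(γ^2*n) + γ * M.card := by
    have hcast : (T'.card : ℝ) = Tle.card + Tgt.card := by
      have := hsplit3
      push_cast [← this]
      ring
    rw [hcast]
    linarith
  have hMr : (M.card : ℝ) ≤ n/2 := by
    have := (Nat.cast_le (α := ℝ)).mpr hMn
    push_cast at this
    linarith
  have hnn : (0:ℝ) ≤ n := Nat.cast_nonneg n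
  have hkb : ((k:ℝ)+1) ≤ 1/γ + 2 := by linarith
  calc (N.card : ℝ) ≤ (M.card : ℝ) + T'.card := hkey2
    _ ≤ M.card + (((k:ℝ)+1)*(γ^2*n) + γ * M.card) := by linarith
    _ ≤ M.card + ((1/γ+2)*(γ^2*n) + γ * (n/2)) := by
        have h1 : ((k:ℝ)+1)*(γ^2*(n:ℝ)) ≤ (1/γ+2)*(γ^2*n) :=
          mul_le_mul_of_nonneg_right hkb (by positivity)
        have h2 : γ * (M.card:ℝ) ≤ γ * ((n:ℝ)/2) := mul_le_mul_of_nonneg_left hMr hγ0.le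
        linarith
    _ ≤ (M.card : ℝ) + 3*γ*n := by
        have hexp : (1/γ+2)*(γ^2*(n:ℝ)) = γ*n + 2*γ^2*n := by
          field_simp
        have hpos : (0:ℝ) ≤ γ*(1-2*γ) := by nlinarith
        nlinarith [mul_nonneg hpos hnn]
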